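/- Let G be a finite simple graph, s a vertex of G, and S = (v_1, …, v_t) a valid strategy for the firefighting process on (G, s). Then for every 1 ≤ i ≤ t, the distance from s to v_i in the subgraph of G induced on (V(G) ∖ {v_1, …, v_t}) ∪ {v_i} is at least i. -/

import Mathlib

open SimpleGraph

variable {V : Type*}

/-- The set of vertices burned by the end of time step `i` (0-indexed: `burnt G s S i` is `B_i`),
when a fire starts at `s` and the firefighter defends the vertices of the list `S` in order. -/
def burnt (G : SimpleGraph V) (s : V) (S : List V) : ℕ → Set V
  | 0 => {s}
  | i + 1 => burnt G s S i ∪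
      {u | u ∉ S.take (i + 1) ∧ ∃ b ∈ burnt G s S i, G.Adj u b}

/-- The set of all vertices ever burned by the strategy `S`. -/
def BurntSet (G : SimpleGraph V) (s : V) (S : List V) : Set V := ⋃ i, burnt G s S i

/-- A strategy is a sequence of pairwise distinct vertices; it is valid if the vertex defended
at each step is not yet burning at the start of that step. -/
def ValidStrategy (G : SimpleGraph V) (s : V) (S : List V) : Prop :=
  S.Nodup ∧ ∀ (i : ℕ) (h : i < S.length), S.get ⟨i, h⟩ ∉ burnt G s S i

/-- The number of vertices saved (i.e. not burned) by the strategy `S`. -/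
noncomputable def sav (G : SimpleGraph V) (s : V) (S : List V) : ℕ := (BurntSet G s S)ᶜ.ncard

/-- A valid strategy is minimal if every proper subsequence of it which is itself a valid
strategy saves strictly fewer vertices. -/
def MinimalStrategy (G : SimpleGraph V) (s : V) (S : List V) : Prop :=
  ValidStrategy G s S ∧ ∀ S' : List V, S'.Sublist S → S' ≠ S → ValidStrategy G s S' →
    sav G s S' < sav G s S

/-- A strategy is optimal if it is minimal and saves the maximum number of vertices. -/
def OptimalStrategy (G : SimpleGraph V) (s : V) (S : List V) : Prop :=
  MinimalStrategy G s S ∧ ∀ S' : List V, ValidStrategy G s S' → sav G s S' ≤ sav G s S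

/-- A walk is an induced path if it is a path and the subgraph induced on its vertices has no
edges besides the edges of the path. -/
def IsInducedPath (G : SimpleGraph V) {a b : V} (p : G.Walk a b) : Prop :=
  p.IsPath ∧ ∀ x ∈ p.support, ∀ y ∈ p.support, G.Adj x y → p.toSubgraph.Adj x y

/-- `u` is reachable from `s` in the subgraph of `G` induced on the complement of `A`. -/
def ReachAvoiding (G : SimpleGraph V) (A : Set V) (s u : V) : Prop :=
  ∃ p : G.Walk s u, ∀ x ∈ p.support, x ∉ A

lemma burnt_mono (G : SimpleGraph V) (s : V) (S : List V) {m n : ℕ} (h : m ≤ n) :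
    burnt G s S m ⊆ burnt G s S n := by
  induction h with
  | refl => exact subset_rfl
  | step h ih => exact ih.trans (fun x hx => Or.inl hx)

lemma mem_burnt_of_walk (G : SimpleGraph V) (s : V) (S : List V) :
    ∀ {u : V} (p : G.Walk u s), (∀ x ∈ p.support, x ∉ S) → u ∈ burnt G s S p.length := by
  intro u p
  induction p with
  | nil => intro _; exact rfl
  | @cons u y s h q ih =>
    intro hsup
    have hy := ih (fun x hx => hsup x (by simp [hx]))
    rw [Walk.length_cons]
    exact Or.inr ⟨fun hmem => hsup u (Walk.start_mem_support _) (List.mem_of_mem_take hmem),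
      ⟨y, hy, h⟩⟩

lemma no_short_path (G : SimpleGraph V) (s : V) (S : List V) (hS : ValidStrategy G s S)
    (i : ℕ) (hi : i < S.length) (v : V) (hveq : v = S.get ⟨i, hi⟩)
    (r : G.Walk v s) (hpath : r.IsPath) (hlen : r.length ≤ i)
    (hA : ∀ x ∈ r.support, x ∉ S ∨ x = v) : False := by
  have hvb : v ∉ burnt G s S i := hveq ▸ hS.2 i hi
  cases r with
  | nil => exact hvb (burnt_mono G s S (Nat.zero_le i) rfl)
  | @cons _ y _ h r' =>
    have hsup : ∀ x ∈ r'.support, x ∉ S := by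
      intro x hx
      rcases hA x (by simp [hx]) with h' | rfl
      · exact h'
      · exact absurd hx (by simpa using List.Nodup.notMem hpath.support_nodup)
    have hy : y ∈ burnt G s S r'.length := mem_burnt_of_walk G s S r' hsup
    have hlen' : r'.length + 1 ≤ i := by simpa using hlen
    have hvmem : v ∈ burnt G s S (r'.length + 1) := by
      refine Or.inr ⟨?_, ⟨y, hy, h⟩⟩
      intro hmem
      obtain ⟨⟨j, hj⟩, hget⟩ := List.mem_iff_get.mp hmem
      have hjlt : j < r'.length + 1 := lt_of_lt_of_le hj (by simp)
      have hjS : j < S.length := lt_of_lt_of_le (lt_of_lt_of_le hjlt hlen') hi.le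
      have : S.get ⟨j, hjS⟩ = S.get ⟨i, hi⟩ := by
        rw [← hveq]
        simpa [List.get_eq_getElem, List.getElem_take] using hget
      have hji : j = i := by
        have := (List.Nodup.get_inj_iff hS.1).mp this
        simpa using this
      omega
    exact hvb (burnt_mono G s S hlen' hvmem)


/-- If `S = (v₁, …, v_t)` is a valid strategy, then for every `1 ≤ i ≤ t` the
distance from `s` to `vᵢ` in the subgraph of `G` induced on `(V(G) ∖ S) ∪ {vᵢ}` is at least `i`.
(Here `i` is 0-indexed, so the bound is `i + 1`.) -/
theorem dist_to_defended_ge {V : Type*} [Fintype V] (G : SimpleGraph V) (s : V)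
    (S : List V) (hS : ValidStrategy G s S) (i : ℕ) (hi : i < S.length)
    (hs : s ∈ ({x | x ∉ S} ∪ {S.get ⟨i, hi⟩} : Set V))
    (hv : S.get ⟨i, hi⟩ ∈ ({x | x ∉ S} ∪ {S.get ⟨i, hi⟩} : Set V)) :
    (i : ℕ∞) + 1 ≤
      (G.induce ({x | x ∉ S} ∪ {S.get ⟨i, hi⟩} : Set V)).edist ⟨s, hs⟩ ⟨S.get ⟨i, hi⟩, hv⟩ := by
  set A : Set V := ({x | x ∉ S} ∪ {S.get ⟨i, hi⟩} : Set V) with hA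
  classical
  by_contra hcon
  push_neg at hcon
  obtain ⟨p, hp⟩ := exists_walk_of_edist_ne_top (hcon.trans_le le_top).ne
  have hlen : p.length ≤ i := by
    rw [← hp] at hcon
    have : (p.length : ℕ∞) < ((i + 1 : ℕ) : ℕ∞) := by exact_mod_cast hcon
    exact Nat.lt_succ_iff.mp (by exact_mod_cast this)
  have hb := p.bypass_isPath
  have hblen : p.bypass.length ≤ i := (Walk.length_bypass_le p).trans hlen
  let emb := SimpleGraph.Embedding.induce (G := G) A
  let q : G.Walk s (S.get ⟨i, hi⟩) := p.bypass.map emb.toHom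
  have hqpath : q.IsPath :=
    Walk.map_isPath_of_injective (f := emb.toHom) Subtype.val_injective hb
  refine no_short_path G s S hS i hi _ rfl q.reverse hqpath.reverse ?_ ?_
  · rw [Walk.length_reverse]
    exact (Walk.length_map _ _).trans_le hblen
  · intro x hx
    rw [Walk.support_reverse, List.mem_reverse] at hx
    change x ∈ (p.bypass.map emb.toHom).support at hx
    rw [Walk.support_map, List.mem_map] at hx
    obtain ⟨a, _, rfl⟩ := hx
    rcases a.2 with h' | h'
    · exact Or.inl h'
    · exact Or.inr h'
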